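/- Let X_1,...,X_t be independent Bernoulli random variables each with success probability 1/(P-1), where P ≥ 2 and t = 2(P-1)(D + ln(1/ε)) for a positive integer D and 0 < ε < 1. Then the probability that X_1 + ... + X_t < D is at most ε. -/

import Mathlib

open MeasureTheory ProbabilityTheory

/-- Chernoff-type bound for non-overlapping steal attempts: `t = 2(P-1)(D + ln(1/ε))`
independent Bernoulli trials, each with success probability `1/(P-1)`, yield fewer than
`D` successes with probability at most `ε`. -/
theorem stmt0 {Ω : Type*} [MeasureSpace Ω] [IsProbabilityMeasure (ℙ : Measure Ω)]
    (P : ℕ) (hP : 2 ≤ P) (D : ℕ) (hD : 0 < D) (ε : ℝ) (hε0 : 0 < ε) (hε1 : ε < 1)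
    (t : ℕ) (ht : (t : ℝ) = 2 * ((P : ℝ) - 1) * ((D : ℝ) + Real.log (1 / ε)))
    (X : Fin t → Ω → ℝ) (hmeas : ∀ i, Measurable (X i))
    (hind : iIndepFun X ℙ)
    (hval : ∀ i ω, X i ω = 0 ∨ X i ω = 1)
    (hbern : ∀ i, ℙ {ω | X i ω = 1} = ENNReal.ofReal (1 / ((P : ℝ) - 1))) :
    ℙ {ω | (∑ i, X i ω) < (D : ℝ)} ≤ ENNReal.ofReal ε := by
  set p : ℝ := 1 / ((P : ℝ) - 1) with hp_def
  have hP1 : (1 : ℝ) ≤ (P : ℝ) - 1 := by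
    have : (2 : ℝ) ≤ (P : ℝ) := by exact_mod_cast hP
    linarith
  have hP0 : (0 : ℝ) < (P : ℝ) - 1 := by linarith
  have hp_pos : 0 < p := by positivity
  have hp_le : p ≤ 1 := by
    rw [hp_def, div_le_one hP0]; exact hP1
  set L : ℝ := Real.log (1 / ε) with hL_def
  have hL_pos : 0 < L := by
    rw [hL_def]
    apply Real.log_pos
    rw [lt_div_iff₀ hε0]; linarith
  set s : ℝ := -Real.log 2 with hs_def
  have hs_le : s ≤ 0 := by
    rw [hs_def, neg_nonpos]; exact Real.log_nonneg (by norm_num)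
  have hes : Real.exp s = 1 / 2 := by
    rw [hs_def, Real.exp_neg, Real.exp_log (by norm_num : (0:ℝ) < 2)]
    norm_num
  -- pointwise identity
  have hpw : ∀ i ω, Real.exp (s * X i ω) = 1 + (Real.exp s - 1) * X i ω := by
    intro i ω
    rcases hval i ω with h | h <;> rw [h] <;> simp [Real.exp_zero]
  -- X i as an indicator
  have hAmeas : ∀ i, MeasurableSet {ω | X i ω = 1} := fun i =>
    (hmeas i) (measurableSet_singleton (1 : ℝ))
  have hXind : ∀ i, X i = Set.indicator {ω | X i ω = 1} (fun _ => (1 : ℝ)) := by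
    intro i
    funext ω
    rcases hval i ω with h | h
    · simp [Set.indicator_apply, h]
    · simp [Set.indicator_apply, h]
  have hXint : ∀ i, Integrable (X i) ℙ := by
    intro i
    rw [hXind i]
    exact (integrable_const (1 : ℝ)).indicator (hAmeas i)
  have hXmean : ∀ i, ∫ ω, X i ω = p := by
    intro i
    have : ∫ ω, X i ω = ∫ ω, Set.indicator {ω | X i ω = 1} (fun _ => (1 : ℝ)) ω := by
      rw [← hXind i]
    rw [this, integral_indicator (hAmeas i), integral_const,
      measureReal_def, Measure.restrict_apply_univ, hbern i, ENNReal.toReal_ofReal hp_pos.le]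
    simp
  -- integrability of exp (s * X i)
  have hexp_int : ∀ i, Integrable (fun ω => Real.exp (s * X i ω)) ℙ := by
    intro i
    have : (fun ω => Real.exp (s * X i ω)) =
        fun ω => 1 + (Real.exp s - 1) * X i ω := by
      funext ω; exact hpw i ω
    rw [this]
    exact (integrable_const (1 : ℝ)).add ((hXint i).const_mul _)
  -- mgf of each X i
  have hmgf : ∀ i, mgf (X i) ℙ s = 1 - p / 2 := by
    intro i
    unfold mgf
    calc ∫ ω, Real.exp (s * X i ω) = ∫ ω, (1 + (Real.exp s - 1) * X i ω) := by
          congr 1; funext ω; exact hpw i ω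
      _ = 1 + (Real.exp s - 1) * p := by
          rw [integral_add (integrable_const _) ((hXint i).const_mul _),
            integral_const, integral_const_mul, hXmean i]
          simp
      _ = 1 - p / 2 := by rw [hes]; ring
  -- mgf of the sum
  have htp : (t : ℝ) * p = 2 * ((D : ℝ) + L) := by
    rw [ht, hp_def]
    field_simp
  have hmgf_sum : mgf (∑ i, X i) ℙ s ≤ Real.exp (-((D : ℝ) + L)) := by
    rw [hind.mgf_sum hmeas]
    calc ∏ i : Fin t, mgf (X i) ℙ s = (1 - p / 2) ^ t := by
          rw [Finset.prod_congr rfl fun i _ => hmgf i]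
          simp
      _ ≤ (Real.exp (-(p / 2))) ^ t := by
          apply pow_le_pow_left₀ (by linarith)
          nlinarith [Real.add_one_le_exp (-(p/2))]
      _ = Real.exp ((t : ℝ) * (-(p / 2))) := by
          rw [← Real.exp_nat_mul]
      _ = Real.exp (-((D : ℝ) + L)) := by
          congr 1
          have : (t : ℝ) * (-(p / 2)) = -(((t : ℝ) * p) / 2) := by ring
          rw [this, htp]; ring
  -- Chernoff bound
  have hsum_meas : Measurable (fun ω => ∑ i, X i ω) := by
    apply Finset.measurable_sum
    intro i _
    exact hmeas i
  have hS_int : Integrable (fun ω => Real.exp (s * (∑ i, X i) ω)) ℙ := by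
    have := hind.integrable_exp_mul_sum (μ := ℙ) (t := s)
      (fun i => hmeas i) (fun i _ => hexp_int i) (s := Finset.univ)
    simpa using this
  have hcher := measure_le_le_exp_mul_mgf (μ := ℙ) (X := ∑ i, X i) (D : ℝ) hs_le hS_int
  -- final numeric bound
  have hfinal : Real.exp (-s * (D : ℝ)) * mgf (∑ i, X i) ℙ s ≤ ε := by
    calc Real.exp (-s * (D : ℝ)) * mgf (∑ i, X i) ℙ s
        ≤ Real.exp (-s * (D : ℝ)) * Real.exp (-((D : ℝ) + L)) := by
          apply mul_le_mul_of_nonneg_left hmgf_sum (Real.exp_pos _).le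
      _ = Real.exp ((D : ℝ) * Real.log 2 - (D : ℝ) - L) := by
          rw [← Real.exp_add]; congr 1; rw [hs_def]; ring
      _ ≤ Real.exp (-L) := by
          apply Real.exp_le_exp.mpr
          have hlog2 : Real.log 2 ≤ 1 := by
            have := Real.log_le_sub_one_of_pos (by norm_num : (0:ℝ) < 2)
            linarith
          have hD0 : (0:ℝ) ≤ (D:ℝ) := Nat.cast_nonneg D
          nlinarith
      _ = ε := by
          rw [hL_def, Real.log_div one_ne_zero hε0.ne', Real.log_one]
          rw [show -(0 - Real.log ε) = Real.log ε by ring, Real.exp_log hε0]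
  -- put it together
  have hmono : ℙ {ω | (∑ i, X i ω) < (D : ℝ)} ≤ ℙ {ω | (∑ i, X i) ω ≤ (D : ℝ)} := by
    apply measure_mono
    intro ω hω
    simp only [Set.mem_setOf_eq, Finset.sum_apply] at *
    exact hω.le
  refine hmono.trans ?_
  rw [← ENNReal.ofReal_toReal (measure_ne_top ℙ _)]
  exact ENNReal.ofReal_le_ofReal (hcher.trans hfinal)
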